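/- Let q > 3 be a prime power and let m be a positive integer. The minimum distance of the toric code associated with the order polytope of the ordinal sum A_m ⊕ A_m of two m-element antichains is d(C_{O_{A_m ⊕ A_m}}) = (q−1)^m (q−2)^m. -/

import Mathlib

open Finset

/-- A subset `W` of `α` is an upper order ideal with respect to the order relation `le`
if it is upward closed. -/
def IsUpperIdeal {α : Type*} (le : α → α → Prop) (W : Set α) : Prop :=
  ∀ ⦃x⦄, x ∈ W → ∀ ⦃y⦄, le x y → y ∈ W

/-- The space `L_P` of sections: the `F`-span of the monomials `∏_{i ∈ W} x_i`,
where `W` ranges over the upper order ideals of the poset `(α, le)`. -/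
def monomialSpan (α : Type*) [Fintype α] (le : α → α → Prop)
    (F : Type*) [Field F] : Submodule F ((α → Fˣ) → F) :=
  Submodule.span F {g : (α → Fˣ) → F |
    ∃ W : Finset α, (∀ x ∈ W, ∀ y, le x y → y ∈ W) ∧
      g = fun x => ∏ i ∈ W, (x i : F)}

/-- The minimum distance of the toric code of the order polytope of the poset `(α, le)`
over the finite field `F`:  `(q-1)^m - max { Z(f) : f ∈ L_P, f ≠ 0 }`. -/
noncomputable def toricMinDist (α : Type*) [Fintype α] (le : α → α → Prop)
    (F : Type*) [Field F] [Fintype F] : ℕ :=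
  (Fintype.card F - 1) ^ Fintype.card α -
    sSup {n : ℕ | ∃ g ∈ monomialSpan α le F, g ≠ 0 ∧
      n = Nat.card {x : α → Fˣ // g x = 0}}

/-- The order relation of the ordinal sum `A_m ⊕ A_m` of two `m`-element antichains,
on `Fin (2*m)`: the first `m` elements form an antichain lying below the antichain formed by
the last `m` elements. -/
def amamLE (m : ℕ) : Fin (2 * m) → Fin (2 * m) → Prop :=
  fun a b => a = b ∨ (a.val < m ∧ m ≤ b.val)

section ML
variable {α : Type*} [Fintype α] [DecidableEq α] (F : Type*) [Field F]

/-- multilinear functions supported on variables in `s` -/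
def ML (s : Finset α) : Submodule F ((α → Fˣ) → F) :=
  Submodule.span F {g | ∃ S : Finset α, S ⊆ s ∧ g = fun x => ∏ i ∈ S, (x i : F)}

variable {F}

lemma mon_mem_ML {S s : Finset α} (h : S ⊆ s) :
    (fun x : α → Fˣ => ∏ i ∈ S, (x i : F)) ∈ ML F s :=
  Submodule.subset_span ⟨S, h, rfl⟩

lemma ML_mono {s t : Finset α} (h : s ⊆ t) : ML F s ≤ ML F t := by
  apply Submodule.span_mono
  rintro g ⟨S, hS, rfl⟩
  exact ⟨S, hS.trans h, rfl⟩

lemma const_mem_ML (c : F) (s : Finset α) : (fun _ : α → Fˣ => c) ∈ ML F s := by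
  have : (fun _ : α → Fˣ => c) = c • (fun x : α → Fˣ => ∏ i ∈ (∅ : Finset α), (x i : F)) := by
    funext x; simp
  rw [this]
  exact Submodule.smul_mem _ _ (mon_mem_ML (empty_subset s))

lemma ML_indep {s : Finset α} {f : (α → Fˣ) → F} (hf : f ∈ ML F s) {a : α} (ha : a ∉ s) :
    ∀ (x : α → Fˣ) (t : Fˣ), f (Function.update x a t) = f x := by
  induction hf using Submodule.span_induction with
  | mem g hg =>
      obtain ⟨S, hS, rfl⟩ := hg
      intro x t
      apply Finset.prod_congr rfl
      intro i hi
      have : i ≠ a := fun h => ha (h ▸ hS hi)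
      rw [Function.update_of_ne this]
  | zero => intro x t; rfl
  | add g h _ _ ihg ihh => intro x t; simp [ihg x t, ihh x t]
  | smul c g _ ihg => intro x t; simp [ihg x t]

lemma ML_decomp {s : Finset α} {a : α} {f : (α → Fˣ) → F} (hf : f ∈ ML F (insert a s)) :
    ∃ g ∈ ML F s, ∃ h ∈ ML F s, f = fun x => g x + (x a : F) * h x := by
  induction hf using Submodule.span_induction with
  | mem g hg =>
      obtain ⟨S, hS, rfl⟩ := hg
      by_cases haS : a ∈ S
      · refine ⟨0, Submodule.zero_mem _, fun x => ∏ i ∈ S.erase a, (x i : F),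
          mon_mem_ML ?_, ?_⟩
        · intro i hi
          rcases mem_insert.mp (hS (mem_of_mem_erase hi)) with h | h
          · exact absurd h (ne_of_mem_erase hi)
          · exact h
        · funext x
          rw [← Finset.mul_prod_erase S _ haS]
          simp
      · refine ⟨fun x => ∏ i ∈ S, (x i : F), mon_mem_ML ?_, 0, Submodule.zero_mem _, ?_⟩
        · intro i hi
          rcases mem_insert.mp (hS hi) with h | h
          · exact absurd (h ▸ hi) haS
          · exact h
        · funext x; simp
  | zero => exact ⟨0, Submodule.zero_mem _, 0, Submodule.zero_mem _, by funext x; simp⟩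
  | add g h _ _ ihg ihh =>
      obtain ⟨g1, hg1, h1, hh1, rfl⟩ := ihg
      obtain ⟨g2, hg2, h2, hh2, rfl⟩ := ihh
      exact ⟨g1 + g2, Submodule.add_mem _ hg1 hg2, h1 + h2, Submodule.add_mem _ hh1 hh2,
        by funext x; simp; ring⟩
  | smul c g _ ihg =>
      obtain ⟨g1, hg1, h1, hh1, rfl⟩ := ihg
      exact ⟨c • g1, Submodule.smul_mem _ _ hg1, c • h1, Submodule.smul_mem _ _ hh1,
        by funext x; simp; ring⟩

lemma mul_coord_mem_ML {s : Finset α} {a : α} {h : (α → Fˣ) → F} (hh : h ∈ ML F s)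
    (ha : a ∉ s) : (fun x => (x a : F) * h x) ∈ ML F (insert a s) := by
  induction hh using Submodule.span_induction with
  | mem g hg =>
      obtain ⟨S, hS, rfl⟩ := hg
      have : (fun x : α → Fˣ => (x a : F) * ∏ i ∈ S, (x i : F))
          = fun x : α → Fˣ => ∏ i ∈ insert a S, (x i : F) := by
        funext x
        rw [Finset.prod_insert (fun h => ha (hS h))]
      rw [this]
      exact mon_mem_ML (insert_subset_insert a hS)
  | zero =>
      have : (fun x : α → Fˣ => (x a : F) * (0 : (α → Fˣ) → F) x) = 0 := by funext x; simp
      rw [this]; exact Submodule.zero_mem _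
  | add g h _ _ ihg ihh =>
      have : (fun x : α → Fˣ => (x a : F) * (g + h) x)
          = (fun x : α → Fˣ => (x a : F) * g x) + fun x : α → Fˣ => (x a : F) * h x := by
        funext x; simp; ring
      rw [this]; exact Submodule.add_mem _ ihg ihh
  | smul c g _ ihg =>
      have : (fun x : α → Fˣ => (x a : F) * (c • g) x)
          = c • fun x : α → Fˣ => (x a : F) * g x := by
        funext x; simp; ring
      rw [this]; exact Submodule.smul_mem _ _ ihg

lemma ML_empty {f : (α → Fˣ) → F} (hf : f ∈ ML F (∅ : Finset α)) :
    ∃ c : F, f = fun _ => c := by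
  have : ML F (∅ : Finset α) = Submodule.span F {fun _ : α → Fˣ => (1 : F)} := by
    unfold ML
    congr 1
    ext g
    constructor
    · rintro ⟨S, hS, rfl⟩
      rw [Finset.subset_empty.mp hS]
      simp
    · rintro rfl
      exact ⟨∅, subset_rfl, by simp⟩
  rw [this, Submodule.mem_span_singleton] at hf
  obtain ⟨c, rfl⟩ := hf
  exact ⟨c, by funext x; simp⟩

end ML
open Finset

section Count
variable {α : Type*} [Fintype α] [DecidableEq α] {F : Type*} [Field F] [Fintype F] [DecidableEq F]

lemma card_partition (P : (α → Fˣ) → Prop) (a : α) :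
    Nat.card {x : α → Fˣ // P x} = ∑ t : Fˣ, Nat.card {x : α → Fˣ // x a = t ∧ P x} := by
  classical
  simp only [Nat.card_eq_fintype_card, Fintype.card_subtype]
  rw [Finset.card_eq_sum_card_fiberwise (f := fun x : α → Fˣ => x a) (t := univ)
    (fun x _ => mem_univ _)]
  apply Finset.sum_congr rfl
  intro t _
  rw [Finset.filter_filter]
  congr 1
  ext x
  simp [and_comm]

lemma slice_card_eq {f : (α → Fˣ) → F} {a : α}
    (hindep : ∀ (x : α → Fˣ) (t : Fˣ), f (Function.update x a t) = f x) (t t' : Fˣ) :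
    Nat.card {x : α → Fˣ // x a = t ∧ f x ≠ 0}
      = Nat.card {x : α → Fˣ // x a = t' ∧ f x ≠ 0} := by
  apply Nat.card_congr
  refine ⟨fun p => ⟨Function.update p.1 a t', ?_⟩, fun p => ⟨Function.update p.1 a t, ?_⟩,
    ?_, ?_⟩
  · exact ⟨Function.update_self a t' p.1, by rw [hindep]; exact p.2.2⟩
  · exact ⟨Function.update_self a t p.1, by rw [hindep]; exact p.2.2⟩
  · rintro ⟨x, hx1, hx2⟩
    ext i
    simp only [Function.update_idem]
    rw [← hx1, Function.update_eq_self]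
  · rintro ⟨x, hx1, hx2⟩
    ext i
    simp only [Function.update_idem]
    rw [← hx1, Function.update_eq_self]

lemma card_indep {f : (α → Fˣ) → F} {a : α}
    (hindep : ∀ (x : α → Fˣ) (t : Fˣ), f (Function.update x a t) = f x) (t : Fˣ) :
    Nat.card {x : α → Fˣ // f x ≠ 0}
      = Fintype.card Fˣ * Nat.card {x : α → Fˣ // x a = t ∧ f x ≠ 0} := by
  rw [card_partition (fun x => f x ≠ 0) a]
  rw [Finset.sum_congr rfl (fun t' _ => slice_card_eq hindep t' t)]
  rw [Finset.sum_const, smul_eq_mul, Fintype.card]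

end Count

section LemmaA
variable {α : Type*} [Fintype α] [DecidableEq α] {F : Type*} [Field F] [Fintype F] [DecidableEq F]

lemma ML_count {s : Finset α} {f : (α → Fˣ) → F} (hf : f ∈ ML F s) (hf0 : f ≠ 0) :
    (Fintype.card Fˣ - 1) ^ s.card * Fintype.card Fˣ ^ (Fintype.card α - s.card)
      ≤ Nat.card {x : α → Fˣ // f x ≠ 0} := by
  induction s using Finset.induction generalizing f with
  | empty =>
      obtain ⟨c, rfl⟩ := ML_empty hf
      have hc : c ≠ 0 := fun h => hf0 (by funext x; simp [h])
      have : Nat.card {x : α → Fˣ // c ≠ 0} = Fintype.card Fˣ ^ Fintype.card α := by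
        rw [Nat.card_congr (Equiv.subtypeUnivEquiv (fun _ => hc)), Nat.card_eq_fintype_card,
          Fintype.card_fun]
      simp only [card_empty, pow_zero, one_mul, Nat.sub_zero]
      rw [this]
  | @insert a s ha ih =>
      obtain ⟨g, hg, h, hh, rfl⟩ := ML_decomp hf
      set k := Fintype.card Fˣ with hk
      set n := Fintype.card α with hn
      set c := s.card with hc
      have hcard : (insert a s).card = c + 1 := Finset.card_insert_of_notMem ha
      have hcn : c + 1 ≤ n := hcard ▸ Finset.card_le_univ (insert a s)
      rw [hcard]
      have hnsub : n - c = (n - (c + 1)) + 1 := by omega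
      -- slice functions
      set ft : Fˣ → (α → Fˣ) → F := fun t x => g x + (t : F) * h x with hft
      have hftML : ∀ t, ft t ∈ ML F s := by
        intro t
        have : ft t = g + (t : F) • h := by funext x; simp [hft]
        rw [this]
        exact Submodule.add_mem _ hg (Submodule.smul_mem _ _ hh)
      have hftindep : ∀ t (x : α → Fˣ) (u : Fˣ), ft t (Function.update x a u) = ft t x :=
        fun t => ML_indep (hftML t) ha
      have hslice : ∀ t : Fˣ, Nat.card {x : α → Fˣ // x a = t ∧ (fun x => g x + (x a : F) * h x) x ≠ 0}
          = Nat.card {x : α → Fˣ // x a = t ∧ ft t x ≠ 0} := by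
        intro t
        apply Nat.card_congr
        apply Equiv.subtypeEquivRight
        intro x
        constructor
        · rintro ⟨h1, h2⟩; exact ⟨h1, by rw [hft]; simp only [← h1]; exact h2⟩
        · rintro ⟨h1, h2⟩; exact ⟨h1, by simp only [h1]; exact h2⟩
      rw [card_partition _ a]
      simp only [hslice]
      by_cases hzero : h = 0
      · -- f = g
        have hftg : ∀ t : Fˣ, ft t = g := by
          intro t; funext x; simp [hft, congrFun hzero x]
        have hf0' : g ≠ 0 := by
          intro hgz
          apply hf0
          funext x
          rw [congrFun hzero x, congrFun hgz x]
          simp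
        simp only [hftg]
        calc (k - 1) ^ (c + 1) * k ^ (n - (c + 1))
            ≤ (k - 1) ^ c * k ^ (n - c) := by
              rw [hnsub, pow_succ, pow_succ]
              calc (k-1)^c * (k-1) * k^(n-(c+1))
                  ≤ (k-1)^c * k * k^(n-(c+1)) :=
                    Nat.mul_le_mul_right _ (Nat.mul_le_mul_left _ (Nat.sub_le k 1))
                _ = (k-1)^c * (k^(n-(c+1)) * k) := by ring
          _ ≤ Nat.card {x : α → Fˣ // g x ≠ 0} := ih hg hf0'
          _ = ∑ t : Fˣ, Nat.card {x : α → Fˣ // x a = t ∧ g x ≠ 0} := card_partition _ a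
      · -- h ≠ 0; at most one bad t
        have hbad : ∀ t₁ t₂ : Fˣ, ft t₁ = 0 → ft t₂ = 0 → t₁ = t₂ := by
          intro t₁ t₂ h1 h2
          by_contra hne
          apply hzero
          funext x
          have e1 : g x + (t₁ : F) * h x = 0 := congrFun h1 x
          have e2 : g x + (t₂ : F) * h x = 0 := congrFun h2 x
          have hprod : ((t₁ : F) - (t₂ : F)) * h x = 0 := by linear_combination e1 - e2
          have ht : (t₁ : F) - (t₂ : F) ≠ 0 :=
            sub_ne_zero.mpr (fun hE => hne (Units.ext hE))
          simpa [ht] using mul_eq_zero.mp hprod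
        set good : Finset Fˣ := univ.filter (fun t => ft t ≠ 0) with hgood
        have hgoodcard : k - 1 ≤ good.card := by
          have : (univ.filter (fun t : Fˣ => ft t = 0)).card ≤ 1 := by
            apply Finset.card_le_one.mpr
            intro t1 h1 t2 h2
            exact hbad t1 t2 (mem_filter.mp h1).2 (mem_filter.mp h2).2
          have hsplit : (univ.filter (fun t : Fˣ => ft t = 0)).card + good.card = k := by
            rw [hgood, hk, ← Finset.card_univ]
            exact Finset.card_filter_add_card_filter_not
              (s := (univ : Finset Fˣ)) (p := fun t => ft t = 0)
          omega
        have hgoodbound : ∀ t ∈ good, (k - 1) ^ c * k ^ (n - (c+1))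
            ≤ Nat.card {x : α → Fˣ // x a = t ∧ ft t x ≠ 0} := by
          intro t ht
          have hftne : ft t ≠ 0 := (mem_filter.mp ht).2
          have := ih (hftML t) hftne
          rw [card_indep (hftindep t) t] at this
          rw [hnsub, pow_succ'] at this
          have hkpos : 0 < k := Fintype.card_pos
          apply Nat.le_of_mul_le_mul_left _ hkpos
          calc k * ((k-1)^c * k^(n-(c+1))) = (k-1)^c * (k * k^(n-(c+1))) := by ring
            _ ≤ k * Nat.card {x : α → Fˣ // x a = t ∧ ft t x ≠ 0} := this
        calc (k - 1) ^ (c+1) * k ^ (n - (c + 1))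
            = (k-1) * ((k-1)^c * k^(n-(c+1))) := by ring
          _ ≤ good.card * ((k-1)^c * k^(n-(c+1))) :=
              Nat.mul_le_mul_right _ hgoodcard
          _ = ∑ _t ∈ good, (k-1)^c * k^(n-(c+1)) := by rw [Finset.sum_const, smul_eq_mul]
          _ ≤ ∑ t ∈ good, Nat.card {x : α → Fˣ // x a = t ∧ ft t x ≠ 0} :=
              Finset.sum_le_sum hgoodbound
          _ ≤ ∑ t : Fˣ, Nat.card {x : α → Fˣ // x a = t ∧ ft t x ≠ 0} :=
              Finset.sum_le_sum_of_subset (Finset.filter_subset _ _)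

end LemmaA

section LemmaB
variable {α : Type*} [Fintype α] [DecidableEq α] {F : Type*} [Field F] [Fintype F] [DecidableEq F]

lemma ML_count2 (t : Finset α) {G : (α → Fˣ) → F} (hG : G ∈ ML F t)
    (hy : ∀ c : F, (fun x : α → Fˣ => G x + c * ∏ j ∈ t, (x j : F)) ≠ 0) :
    ∀ s : Finset α, Disjoint s t → ∀ H ∈ ML F s,
    (Fintype.card Fˣ - 1) ^ t.card * Fintype.card Fˣ ^ (Fintype.card α - t.card)
      ≤ Nat.card {x : α → Fˣ // G x + H x * ∏ j ∈ t, (x j : F) ≠ 0} := by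
  intro s
  induction s using Finset.induction with
  | empty =>
      intro _ H hH
      obtain ⟨c, rfl⟩ := ML_empty hH
      have hmem : (fun x : α → Fˣ => G x + c * ∏ j ∈ t, (x j : F)) ∈ ML F t := by
        have : (fun x : α → Fˣ => G x + c * ∏ j ∈ t, (x j : F))
            = G + c • (fun x : α → Fˣ => ∏ j ∈ t, (x j : F)) := by
          funext x; simp
        rw [this]
        exact Submodule.add_mem _ hG (Submodule.smul_mem _ _ (mon_mem_ML subset_rfl))
      have := ML_count hmem (hy c)
      simpa using this
  | @insert a s ha ih =>
      intro hdisj H hH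
      have hat : a ∉ t := Finset.disjoint_left.mp hdisj (mem_insert_self a s)
      have hst : Disjoint s t := (Finset.disjoint_insert_left.mp hdisj).2
      obtain ⟨H0, hH0, H1, hH1, rfl⟩ := ML_decomp hH
      set k := Fintype.card Fˣ with hk
      set n := Fintype.card α with hn
      have htn : t.card + 1 ≤ n := by
        have hsub : t ⊆ univ.erase a := fun i hi =>
          mem_erase.mpr ⟨fun h => hat (by rw [← h]; exact hi), mem_univ i⟩
        have h2 := Finset.card_le_card hsub
        rw [Finset.card_erase_of_mem (mem_univ a), Finset.card_univ] at h2
        have : 0 < n := Fintype.card_pos_iff.mpr ⟨a⟩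
        omega
      have hnsub : n - t.card = (n - (t.card + 1)) + 1 := by omega
      set Y : (α → Fˣ) → F := fun x => ∏ j ∈ t, (x j : F) with hY
      set fv : Fˣ → (α → Fˣ) → F := fun v x => G x + (H0 x + (v : F) * H1 x) * Y x with hfv
      have hHv : ∀ v : Fˣ, (fun x : α → Fˣ => H0 x + (v : F) * H1 x) ∈ ML F s := by
        intro v
        have : (fun x : α → Fˣ => H0 x + (v : F) * H1 x) = H0 + (v : F) • H1 := by
          funext x; simp
        rw [this]
        exact Submodule.add_mem _ hH0 (Submodule.smul_mem _ _ hH1)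
      have hYindep : ∀ (x : α → Fˣ) (u : Fˣ), Y (Function.update x a u) = Y x := by
        intro x u
        apply Finset.prod_congr rfl
        intro j hj
        rw [Function.update_of_ne (fun h => hat (by rw [← h]; exact hj))]
      have hfvindep : ∀ v (x : α → Fˣ) (u : Fˣ), fv v (Function.update x a u) = fv v x := by
        intro v x u
        rw [hfv]
        simp only []
        rw [ML_indep hG hat x u, ML_indep (hHv v) ha x u, hYindep x u]
      have hslice : ∀ v : Fˣ,
          Nat.card {x : α → Fˣ // x a = v ∧ G x + (H0 x + (x a : F) * H1 x) * Y x ≠ 0}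
            = Nat.card {x : α → Fˣ // x a = v ∧ fv v x ≠ 0} := by
        intro v
        apply Nat.card_congr
        apply Equiv.subtypeEquivRight
        intro x
        constructor
        · rintro ⟨h1, h2⟩; exact ⟨h1, by rw [hfv]; simp only [← h1]; exact h2⟩
        · rintro ⟨h1, h2⟩; refine ⟨h1, ?_⟩; rw [hfv] at h2; simp only [h1]; exact h2
      have hbound : ∀ v : Fˣ, (k - 1) ^ t.card * k ^ (n - (t.card + 1))
          ≤ Nat.card {x : α → Fˣ // x a = v ∧ fv v x ≠ 0} := by
        intro v
        have hIH := ih hst _ (hHv v)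
        have heq : Nat.card {x : α → Fˣ // fv v x ≠ 0}
            = k * Nat.card {x : α → Fˣ // x a = v ∧ fv v x ≠ 0} :=
          card_indep (hfvindep v) v
        have hIH2 : (k - 1) ^ t.card * k ^ (n - t.card)
            ≤ Nat.card {x : α → Fˣ // fv v x ≠ 0} := hIH
        have hIH' : (k - 1) ^ t.card * k ^ (n - t.card)
            ≤ k * Nat.card {x : α → Fˣ // x a = v ∧ fv v x ≠ 0} := heq ▸ hIH2
        apply Nat.le_of_mul_le_mul_left _ (Fintype.card_pos (α := Fˣ))
        calc k * ((k - 1) ^ t.card * k ^ (n - (t.card + 1)))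
            = (k - 1) ^ t.card * (k ^ (n - (t.card + 1)) * k) := by ring
          _ = (k - 1) ^ t.card * k ^ (n - t.card) := by rw [hnsub, pow_succ]
          _ ≤ k * Nat.card {x : α → Fˣ // x a = v ∧ fv v x ≠ 0} := hIH'
      calc (k - 1) ^ t.card * k ^ (n - t.card)
          = ∑ _v : Fˣ, (k - 1) ^ t.card * k ^ (n - (t.card + 1)) := by
            rw [Finset.sum_const, smul_eq_mul, Finset.card_univ, ← hk, hnsub, pow_succ]
            ring
        _ ≤ ∑ v : Fˣ, Nat.card {x : α → Fˣ // x a = v ∧ fv v x ≠ 0} :=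
            Finset.sum_le_sum (fun v _ => hbound v)
        _ = ∑ v : Fˣ, Nat.card {x : α → Fˣ // x a = v ∧ G x + (H0 x + (x a : F) * H1 x) * Y x ≠ 0} :=
            (Finset.sum_congr rfl (fun v _ => (hslice v).symm))
        _ = Nat.card {x : α → Fˣ // G x + (H0 x + (x a : F) * H1 x) * Y x ≠ 0} :=
            (card_partition _ a).symm
        _ = Nat.card {x : α → Fˣ // G x + (fun x => H0 x + (x a : F) * H1 x) x * ∏ j ∈ t, (x j : F) ≠ 0} := rfl

end LemmaB

section Main
variable {F : Type*} [Field F] [Fintype F] [DecidableEq F]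

/-- the top antichain as a finset -/
def topF (m : ℕ) : Finset (Fin (2*m)) := univ.filter (fun j => m ≤ j.val)
/-- the bottom antichain as a finset -/
def botF (m : ℕ) : Finset (Fin (2*m)) := univ.filter (fun j => ¬ m ≤ j.val)

lemma bot_card (m : ℕ) : (botF m).card = m := by
  have h : (botF m).card = (Finset.range m).card := by
    refine Finset.card_bij' (fun j _ => j.val)
      (fun i hi => (⟨i, by have := mem_range.mp hi; omega⟩ : Fin (2*m)))
      (fun a ha => by have := (mem_filter.mp ha).2; exact mem_range.mpr (by omega))
      (fun i hi => mem_filter.mpr ⟨mem_univ _, by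
        simp only [Fin.val_mk]
        have := mem_range.mp hi
        omega⟩)
      (fun a ha => rfl) (fun i hi => rfl)
  rw [h, Finset.card_range]

lemma top_card (m : ℕ) : (topF m).card = m := by
  have h := Finset.card_filter_add_card_filter_not
    (s := (univ : Finset (Fin (2*m)))) (p := fun j => m ≤ j.val)
  have hb := bot_card m
  rw [Finset.card_univ, Fintype.card_fin] at h
  unfold topF
  unfold botF at hb
  omega

lemma bot_top_disjoint (m : ℕ) : Disjoint (botF m) (topF m) := by
  rw [Finset.disjoint_left]
  intro j hj hj'
  exact (mem_filter.mp hj).2 (mem_filter.mp hj').2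

lemma span_decomp (m : ℕ) {f : (Fin (2*m) → Fˣ) → F}
    (hf : f ∈ monomialSpan (Fin (2*m)) (amamLE m) F) :
    ∃ G ∈ ML F (topF m), ∃ H ∈ ML F (botF m),
      f = fun x => G x + H x * ∏ j ∈ topF m, (x j : F) := by
  induction hf using Submodule.span_induction with
  | mem g hg =>
      obtain ⟨W, hW, rfl⟩ := hg
      by_cases hsub : W ⊆ topF m
      · exact ⟨_, mon_mem_ML hsub, 0, Submodule.zero_mem _, by funext x; simp⟩
      · obtain ⟨b, hbW, hb⟩ : ∃ b ∈ W, ¬ m ≤ b.val := by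
          by_contra hcon
          push_neg at hcon
          exact hsub (fun j hj => mem_filter.mpr ⟨mem_univ _, hcon j hj⟩)
        have htop : topF m ⊆ W := by
          intro j hj
          exact hW b hbW j (Or.inr ⟨by omega, (mem_filter.mp hj).2⟩)
        refine ⟨0, Submodule.zero_mem _, fun x => ∏ i ∈ W \ topF m, (x i : F),
          mon_mem_ML ?_, ?_⟩
        · intro i hi
          have h1 := (mem_sdiff.mp hi).2
          refine mem_filter.mpr ⟨mem_univ _, fun hle => h1 (mem_filter.mpr ⟨mem_univ _, hle⟩)⟩
        · funext x
          rw [← Finset.prod_sdiff htop]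
          simp
  | zero => exact ⟨0, Submodule.zero_mem _, 0, Submodule.zero_mem _, by funext x; simp⟩
  | add g h _ _ ihg ihh =>
      obtain ⟨G1, hG1, H1, hH1, rfl⟩ := ihg
      obtain ⟨G2, hG2, H2, hH2, rfl⟩ := ihh
      exact ⟨G1 + G2, Submodule.add_mem _ hG1 hG2, H1 + H2, Submodule.add_mem _ hH1 hH2,
        by funext x; simp; ring⟩
  | smul c g _ ihg =>
      obtain ⟨G1, hG1, H1, hH1, rfl⟩ := ihg
      exact ⟨c • G1, Submodule.smul_mem _ _ hG1, c • H1, Submodule.smul_mem _ _ hH1,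
        by funext x; simp; ring⟩

lemma ML_top_le (m : ℕ) :
    ML F (topF m) ≤ monomialSpan (Fin (2*m)) (amamLE m) F := by
  apply Submodule.span_le.mpr
  rintro g ⟨S, hS, rfl⟩
  apply Submodule.subset_span
  refine ⟨S, ?_, rfl⟩
  intro x hx y hxy
  rcases hxy with rfl | ⟨h1, _⟩
  · exact hx
  · have := (mem_filter.mp (hS hx)).2
    omega

lemma prod_sub_one_mem_ML {α : Type*} [Fintype α] [DecidableEq α] (s : Finset α) :
    (fun x : α → Fˣ => ∏ j ∈ s, ((x j : F) - 1)) ∈ ML F s := by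
  induction s using Finset.induction with
  | empty => simpa using const_mem_ML (1 : F) (∅ : Finset α)
  | @insert a s ha ih =>
      have heq : (fun x : α → Fˣ => ∏ j ∈ insert a s, ((x j : F) - 1))
          = (fun x : α → Fˣ => (x a : F) * ∏ j ∈ s, ((x j : F) - 1))
            + (-1 : F) • (fun x : α → Fˣ => ∏ j ∈ s, ((x j : F) - 1)) := by
        funext x
        rw [Finset.prod_insert ha]
        simp
        ring
      rw [heq]
      exact Submodule.add_mem _ (mul_coord_mem_ML ih ha)
        (Submodule.smul_mem _ _ (ML_mono (subset_insert a s) ih))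

end Main

section Main2
variable {F : Type*} [Field F] [Fintype F] [DecidableEq F]

lemma card_zero_add_nonzero {α : Type*} [Fintype α] [DecidableEq α] (g : (α → Fˣ) → F) :
    Nat.card {x : α → Fˣ // g x = 0} + Nat.card {x : α → Fˣ // g x ≠ 0}
      = Fintype.card Fˣ ^ Fintype.card α := by
  classical
  simp only [Nat.card_eq_fintype_card, Fintype.card_subtype]
  rw [← Fintype.card_fun, ← Finset.card_univ]
  exact Finset.card_filter_add_card_filter_not (p := fun x => g x = 0)

lemma main_lower (m : ℕ) {f : (Fin (2*m) → Fˣ) → F}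
    (hf : f ∈ monomialSpan (Fin (2*m)) (amamLE m) F) (h0 : f ≠ 0) :
    (Fintype.card Fˣ - 1) ^ m * Fintype.card Fˣ ^ m
      ≤ Nat.card {x : Fin (2*m) → Fˣ // f x ≠ 0} := by
  obtain ⟨G, hG, H, hH, rfl⟩ := span_decomp m hf
  have hcards : Fintype.card (Fin (2*m)) - (topF m).card = m := by
    rw [Fintype.card_fin, top_card]; omega
  by_cases hcase : ∀ c : F,
      (fun x : Fin (2*m) → Fˣ => G x + c * ∏ j ∈ topF m, (x j : F)) ≠ 0
  · have := ML_count2 (topF m) hG hcase (botF m) (bot_top_disjoint m) H hH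
    rw [hcards] at this
    rw [top_card] at this
    exact this
  · push_neg at hcase
    obtain ⟨c, hc⟩ := hcase
    have hGx : ∀ x, G x = -(c * ∏ j ∈ topF m, (x j : F)) := by
      intro x
      have h := congrFun hc x
      simp only [Pi.zero_apply] at h
      exact eq_neg_of_add_eq_zero_left h
    set H' : (Fin (2*m) → Fˣ) → F := fun x => H x - c with hH'
    have hH'mem : H' ∈ ML F (botF m) := by
      have he : H' = H + (-c) • (fun _ : Fin (2*m) → Fˣ => (1 : F)) := by
        funext x; simp [hH']; ring
      rw [he]
      exact Submodule.add_mem _ hH (Submodule.smul_mem _ _ (const_mem_ML 1 _))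
    have hfe : ∀ x : Fin (2*m) → Fˣ,
        G x + H x * ∏ j ∈ topF m, (x j : F) = H' x * ∏ j ∈ topF m, (x j : F) := by
      intro x; rw [hGx x, hH']; ring
    have hYne : ∀ x : Fin (2*m) → Fˣ, (∏ j ∈ topF m, (x j : F)) ≠ 0 :=
      fun x => Finset.prod_ne_zero_iff.mpr (fun j _ => Units.ne_zero _)
    have hH'0 : H' ≠ 0 := by
      intro hz
      apply h0
      funext x
      rw [hfe x, congrFun hz x]
      simp
    have hbound := ML_count hH'mem hH'0
    rw [bot_card, Fintype.card_fin, show 2*m - m = m by omega] at hbound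
    have hcardeq : Nat.card {x : Fin (2*m) → Fˣ // H' x ≠ 0}
        = Nat.card {x : Fin (2*m) → Fˣ // G x + H x * ∏ j ∈ topF m, (x j : F) ≠ 0} := by
      apply Nat.card_congr
      apply Equiv.subtypeEquivRight
      intro x
      rw [hfe x]
      constructor
      · exact fun h => mul_ne_zero h (hYne x)
      · intro h hz; exact h (by rw [hz]; ring)
    rw [hcardeq] at hbound
    exact hbound

/-- the extremal codeword -/
def fstar (F : Type*) [Field F] (m : ℕ) : (Fin (2*m) → Fˣ) → F :=
  fun x => ∏ j ∈ topF m, ((x j : F) - 1)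

lemma fstar_ne (m : ℕ) (hq : 2 < Fintype.card F) : fstar F m ≠ 0 := by
  show (fun x : Fin (2*m) → Fˣ => ∏ j ∈ topF m, ((x j : F) - 1)) ≠ 0
  classical
  have hcard : ({0, 1} : Finset F).card ≤ 2 := by
    apply le_trans (Finset.card_insert_le _ _)
    simp
  have hne : (univ \ ({0, 1} : Finset F)).Nonempty := by
    apply Finset.card_pos.mp
    have := Finset.card_sdiff_of_subset (Finset.subset_univ ({0,1} : Finset F))
    rw [this, Finset.card_univ]
    omega
  obtain ⟨a, ha⟩ := hne
  rw [Finset.mem_sdiff] at ha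
  have ha0 : a ≠ 0 := fun h => ha.2 (by simp [h])
  have ha1 : a ≠ 1 := fun h => ha.2 (by simp [h])
  intro hz
  have := congrFun hz (fun _ => Units.mk0 a ha0)
  simp only [Pi.zero_apply] at this
  have hne' : (∏ _j ∈ topF m, (a - 1)) ≠ 0 :=
    Finset.prod_ne_zero_iff.mpr (fun j _ => sub_ne_zero.mpr ha1)
  exact hne' (by simpa using this)

lemma fstar_count (m : ℕ) :
    Nat.card {x : Fin (2*m) → Fˣ // fstar F m x ≠ 0}
      = (Fintype.card Fˣ - 1) ^ m * Fintype.card Fˣ ^ m := by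
  classical
  show Nat.card {x : Fin (2*m) → Fˣ // (∏ j ∈ topF m, ((x j : F) - 1)) ≠ 0}
      = (Fintype.card Fˣ - 1) ^ m * Fintype.card Fˣ ^ m
  rw [Nat.card_eq_fintype_card, Fintype.card_subtype]
  have hset : (univ.filter fun x : Fin (2*m) → Fˣ => (∏ j ∈ topF m, ((x j : F) - 1)) ≠ 0)
      = Fintype.piFinset (fun j : Fin (2*m) =>
          if m ≤ j.val then (univ.erase (1 : Fˣ)) else univ) := by
    ext x
    simp only [mem_filter, mem_univ, true_and, Fintype.mem_piFinset]
    rw [Finset.prod_ne_zero_iff]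
    constructor
    · intro h j
      by_cases hj : m ≤ j.val
      · rw [if_pos hj]
        refine mem_erase.mpr ⟨?_, mem_univ _⟩
        intro h1
        have h2 := h j (mem_filter.mpr ⟨mem_univ _, hj⟩)
        rw [h1] at h2
        simp at h2
      · rw [if_neg hj]; exact mem_univ _
    · intro h j hj
      have hj2 := (mem_filter.mp hj).2
      have h3 := h j
      rw [if_pos hj2] at h3
      have hne := (mem_erase.mp h3).1
      intro hz
      exact hne (Units.ext (by simpa using sub_eq_zero.mp hz))
  rw [hset, Fintype.card_piFinset]
  have h1 : ∀ j ∈ topF m,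
      ((if m ≤ j.val then (univ.erase (1 : Fˣ)) else univ).card) = Fintype.card Fˣ - 1 :=
    fun j hj => by
      rw [if_pos (mem_filter.mp hj).2, Finset.card_erase_of_mem (mem_univ _), Finset.card_univ]
  have h2 : ∀ j ∈ botF m,
      ((if m ≤ j.val then (univ.erase (1 : Fˣ)) else univ).card) = Fintype.card Fˣ :=
    fun j hj => by
      rw [if_neg (mem_filter.mp hj).2, Finset.card_univ]
  calc ∏ j : Fin (2*m), ((if m ≤ j.val then (univ.erase (1 : Fˣ)) else univ).card)
      = (∏ j ∈ topF m, ((if m ≤ j.val then (univ.erase (1 : Fˣ)) else univ).card))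
        * ∏ j ∈ botF m, ((if m ≤ j.val then (univ.erase (1 : Fˣ)) else univ).card) :=
        (Finset.prod_filter_mul_prod_filter_not univ _ _).symm
    _ = (Fintype.card Fˣ - 1) ^ m * Fintype.card Fˣ ^ m := by
        rw [Finset.prod_congr rfl h1, Finset.prod_congr rfl h2, Finset.prod_const,
          Finset.prod_const, top_card, bot_card]

end Main2


/-- Let `q > 3` be a prime power (realized as the cardinality of a finite
field `F`) and let `m` be a positive integer.  The minimum distance of the toric code of the
order polytope of `A_m ⊕ A_m` is `(q-1)^m * (q-2)^m`. -/
theorem stmt9 (q m : ℕ) (hq : 3 < q) (hm : 0 < m)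
    (F : Type) [Field F] [Fintype F] (hF : Fintype.card F = q) :
    toricMinDist (Fin (2 * m)) (amamLE m) F = (q - 1) ^ m * (q - 2) ^ m := by
  classical
  have hk : Fintype.card Fˣ = q - 1 := by rw [Fintype.card_units, hF]
  rw [toricMinDist, hF, Fintype.card_fin]
  set Z := {n : ℕ | ∃ g ∈ monomialSpan (Fin (2 * m)) (amamLE m) F, g ≠ 0 ∧
      n = Nat.card {x : Fin (2 * m) → Fˣ // g x = 0}} with hZdef
  have hfmem : fstar F m ∈ monomialSpan (Fin (2*m)) (amamLE m) F :=
    ML_top_le m (prod_sub_one_mem_ML (topF m))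
  have hfne : fstar F m ≠ 0 := fstar_ne m (by rw [hF]; omega)
  have hcount : Nat.card {x : Fin (2*m) → Fˣ // fstar F m x ≠ 0} = (q - 2) ^ m * (q - 1) ^ m := by
    have h := fstar_count (F := F) (m := m)
    rw [hk] at h
    have h2 : Nat.card {x : Fin (2*m) → Fˣ // fstar F m x ≠ 0} = (q - 1 - 1)^m * (q-1)^m := h
    rw [h2, show q - 1 - 1 = q - 2 by omega]
  have htot : ∀ g : (Fin (2*m) → Fˣ) → F,
      Nat.card {x : Fin (2*m) → Fˣ // g x = 0} + Nat.card {x : Fin (2*m) → Fˣ // g x ≠ 0}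
        = (q - 1) ^ (2*m) := by
    intro g
    have := card_zero_add_nonzero g
    rwa [hk, Fintype.card_fin] at this
  have hub : ∀ n ∈ Z, n ≤ (q-1)^(2*m) - (q-2)^m * (q-1)^m := by
    rintro n ⟨g, hg, hgne, rfl⟩
    have h1 := main_lower m hg hgne
    rw [hk, show q - 1 - 1 = q - 2 by omega] at h1
    have h2 := htot g
    omega
  have hmem : ((q-1)^(2*m) - (q-2)^m * (q-1)^m) ∈ Z := by
    refine ⟨fstar F m, hfmem, hfne, ?_⟩
    have h2 := htot (fstar F m)
    rw [hcount] at h2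
    omega
  have hsup : sSup Z = (q-1)^(2*m) - (q-2)^m * (q-1)^m :=
    le_antisymm (csSup_le ⟨_, hmem⟩ hub) (le_csSup ⟨_, hub⟩ hmem)
  have hle : (q-2)^m * (q-1)^m ≤ (q-1)^(2*m) := by
    calc (q-2)^m * (q-1)^m ≤ (q-1)^m * (q-1)^m :=
          Nat.mul_le_mul_right _ (Nat.pow_le_pow_left (by omega) m)
      _ = (q-1)^(2*m) := by rw [← pow_add]; congr 1; omega
  rw [hsup, Nat.sub_sub_self hle, mul_comm]
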